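/- Injectivity of the Radon transform: Let f₁, f₂ : ℝ^p → ℝ be integrable functions. If for every unit vector θ ∈ ℝ^p there is an orthonormal basis {θ, e₁, …, e_{p−1}} of ℝ^p extending θ such that R(f₁)(θ, u) = R(f₂)(θ, u) for almost every u ∈ ℝ, then f₁ = f₂ almost everywhere on ℝ^p. -/

import Mathlib

set_option maxHeartbeats 1000000
set_option synthInstance.maxHeartbeats 400000

open scoped ContDiff
open MeasureTheory FourierTransform RealInnerProductSpace SchwartzMap

/-- The Radon transform of `f : ℝ^p → ℝ` along the direction `θ`, using the orthonormal
family `e` completing `θ` to a basis. -/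
noncomputable def radon (p : ℕ) (f : EuclideanSpace ℝ (Fin p) → ℝ)
    (θ : EuclideanSpace ℝ (Fin p)) (e : Fin (p - 1) → EuclideanSpace ℝ (Fin p)) (u : ℝ) : ℝ :=
  ∫ s : EuclideanSpace ℝ (Fin (p - 1)), f (u • θ + ∑ j, s j • e j)


section Aux

variable {V : Type*} [NormedAddCommGroup V] [InnerProductSpace ℝ V]
  [MeasurableSpace V] [BorelSpace V] [FiniteDimensional ℝ V]

/-- A smooth compactly supported function is a Schwartz map. -/
noncomputable def mySchwartz (f : V → ℂ) (hf : ContDiff ℝ ∞ f) (hc : HasCompactSupport f) :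
    SchwartzMap V ℂ where
  toFun := f
  smooth' := hf
  decay' := by
    intro k n
    have hcs : HasCompactSupport (fun x ↦ ‖x‖ ^ k * ‖iteratedFDeriv ℝ n f x‖) := by
      apply HasCompactSupport.mul_left
      exact (hc.iteratedFDeriv n).norm
    obtain ⟨C, hC⟩ := (Continuous.bounded_above_of_compact_support (by
      exact (continuous_norm.pow k).mul (hf.continuous_iteratedFDeriv (by exact_mod_cast le_top)).norm) hcs)
    exact ⟨C, fun x ↦ (Real.le_norm_self _).trans (hC x)⟩

theorem fourier_zero_imp_ae_zero {g : V → ℂ} (hg : Integrable g)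
    (h : ∀ ξ, 𝓕 g ξ = 0) : ∀ᵐ x, g x = 0 := by
  apply ae_eq_zero_of_integral_contDiff_smul_eq_zero hg.locallyIntegrable
  intro ψ hψ hψc
  set Ψ : SchwartzMap V ℂ := mySchwartz (fun x ↦ (ψ x : ℂ))
    (Complex.ofRealCLM.contDiff.comp hψ) (hψc.comp_left (g := fun r : ℝ ↦ (r : ℂ)) (by simp)) with hΨ
  set Φ : SchwartzMap V ℂ := (fourierTransformCLE ℝ 𝓢(V, ℂ)).symm Ψ with hΦdef
  have hΦ : 𝓕 (Φ : V → ℂ) = (Ψ : V → ℂ) := by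
    have : fourierTransformCLE ℝ 𝓢(V, ℂ) Φ = Ψ := (fourierTransformCLE ℝ 𝓢(V, ℂ)).apply_symm_apply Ψ
    rw [← fourier_coe, ← fourierTransformCLE_apply (R := ℝ) Φ]
    exact congrArg _ this
  have flip : ∫ ξ, (𝓕 (Φ : V → ℂ)) ξ • g ξ = ∫ x, (Φ : V → ℂ) x • (𝓕 g) x := by
    have := VectorFourier.integral_fourierIntegral_smul_eq_flip (L := innerₗ V)
      (μ := volume) (ν := volume) Real.continuous_fourierChar continuous_inner Φ.integrable hg
    rw [flip_innerₗ] at this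
    exact this
  have h0 : ∫ x, (Φ : V → ℂ) x • (𝓕 g) x = 0 := by
    simp only [h, smul_zero, integral_zero]
  rw [hΦ, h0] at flip
  have hcoe : ∀ ξ, (Ψ : V → ℂ) ξ • g ξ = ψ ξ • g ξ := by
    intro ξ
    show ((ψ ξ : ℂ)) • g ξ = ψ ξ • g ξ
    rw [Complex.coe_smul]
  simpa only [hcoe] using flip


lemma slice_zero (p : ℕ) (f₁ f₂ : EuclideanSpace ℝ (Fin p) → ℝ)
    (hf₁ : Integrable f₁) (hf₂ : Integrable f₂)
    (θ : EuclideanSpace ℝ (Fin p)) (hθ : ‖θ‖ = 1)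
    (e : Fin (p - 1) → EuclideanSpace ℝ (Fin p))
    (horth : Orthonormal ℝ (Sum.elim (fun _ : Unit => θ) e))
    (hspan : Submodule.span ℝ (Set.range (Sum.elim (fun _ : Unit => θ) e)) = ⊤)
    (hae : ∀ᵐ u : ℝ, radon p f₁ θ e u = radon p f₂ θ e u) (r : ℝ) :
    𝓕 (fun x ↦ ((f₁ x - f₂ x : ℝ) : ℂ)) (r • θ) = 0 := by
  classical
  set g : EuclideanSpace ℝ (Fin p) → ℂ := fun x ↦ ((f₁ x - f₂ x : ℝ) : ℂ) with hgdef
  have hg : Integrable g := (hf₁.sub hf₂).ofReal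
  set b : OrthonormalBasis (Unit ⊕ Fin (p - 1)) ℝ (EuclideanSpace ℝ (Fin p)) :=
    OrthonormalBasis.mk horth (le_of_eq hspan.symm) with hbdef
  have hb : ∀ i, b i = Sum.elim (fun _ : Unit => θ) e i := fun i ↦ by
    rw [hbdef, OrthonormalBasis.coe_mk]
  set M : (ℝ × EuclideanSpace ℝ (Fin (p - 1))) ≃ᵐ EuclideanSpace ℝ (Fin p) :=
    ((MeasurableEquiv.funUnique Unit ℝ).symm.prodCongr
        ((MeasurableEquiv.toLp 2 (Fin (p - 1) → ℝ)).symm)).trans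
      ((MeasurableEquiv.sumPiEquivProdPi (fun _ : Unit ⊕ Fin (p - 1) => ℝ)).symm.trans
        ((((MeasurableEquiv.toLp 2 (Unit ⊕ Fin (p - 1) → ℝ)).symm).symm).trans
          b.repr.symm.toHomeomorph.toMeasurableEquiv)) with hMdef
  have hM : MeasurePreserving M volume volume := by
    have m1 := ((volume_preserving_funUnique Unit ℝ).symm _).prod
      (EuclideanSpace.volume_preserving_symm_measurableEquiv_toLp (Fin (p - 1)))
    have m2 := volume_measurePreserving_sumPiEquivProdPi_symm (fun _ : Unit ⊕ Fin (p - 1) => ℝ)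
    have m3 := (EuclideanSpace.volume_preserving_symm_measurableEquiv_toLp (Unit ⊕ Fin (p - 1))).symm _
    have m4 := b.measurePreserving_repr_symm
    exact ((m4.comp m3).comp m2).comp m1
  have hMapp : ∀ (u : ℝ) (s : EuclideanSpace ℝ (Fin (p - 1))),
      M (u, s) = u • θ + ∑ j, s j • e j := by
    intro u s
    have : M (u, s) = b.repr.symm (((MeasurableEquiv.toLp 2 (Unit ⊕ Fin (p - 1) → ℝ)).symm).symm
        ((MeasurableEquiv.sumPiEquivProdPi (fun _ : Unit ⊕ Fin (p - 1) => ℝ)).symm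
          ((MeasurableEquiv.funUnique Unit ℝ).symm u,
            (MeasurableEquiv.toLp 2 (Fin (p - 1) → ℝ)).symm s))) := rfl
    rw [this, ← OrthonormalBasis.sum_repr_symm, Fintype.sum_sum_type]
    congr 1
    · simp only [Finset.univ_unique, Finset.sum_singleton, hb, Sum.elim_inl]
      congr 1
    · refine Finset.sum_congr rfl fun j _ ↦ ?_
      rw [hb, Sum.elim_inr]
      congr 1
  have hinner : ∀ (u : ℝ) (s : EuclideanSpace ℝ (Fin (p - 1))),
      ⟪M (u, s), r • θ⟫ = r * u := by
    intro u s
    rw [hMapp, real_inner_smul_right, inner_add_left, real_inner_smul_left]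
    have h1 : ⟪θ, θ⟫ = 1 := by
      have := horth.1 (Sum.inl ())
      simp only [Sum.elim_inl] at this
      rw [real_inner_self_eq_norm_mul_norm, this, one_mul]
    have h2 : ⟪∑ j, s j • e j, θ⟫ = 0 := by
      rw [sum_inner]
      refine Finset.sum_eq_zero fun j _ ↦ ?_
      rw [real_inner_smul_left]
      have := horth.2 (show (Sum.inr j : Unit ⊕ Fin (p - 1)) ≠ Sum.inl () by simp)
      simp only [Sum.elim_inr, Sum.elim_inl] at this
      rw [this, mul_zero]
    rw [h1, h2, mul_one, add_zero]
  -- main computation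
  have hFint : Integrable (fun x ↦ 𝐞 (-⟪x, r • θ⟫) • g x) := by
    have B : Continuous fun q : EuclideanSpace ℝ (Fin p) × EuclideanSpace ℝ (Fin p) =>
        (innerₗ (EuclideanSpace ℝ (Fin p))) q.1 q.2 := continuous_inner
    exact (VectorFourier.fourierIntegral_convergent_iff Real.continuous_fourierChar B (r • θ)).2 hg
  rw [Real.fourier_eq]
  rw [← hM.integral_comp M.measurableEmbedding]
  have hFint' : Integrable (fun q : ℝ × EuclideanSpace ℝ (Fin (p - 1)) ↦
      𝐞 (-⟪M q, r • θ⟫) • g (M q)) (volume.prod volume) := by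
    rw [← Measure.volume_eq_prod]
    exact (hM.integrable_comp_emb M.measurableEmbedding).2 hFint
  rw [Measure.volume_eq_prod, integral_prod _ hFint']
  have hs₁ : ∀ᵐ u : ℝ, Integrable (fun s ↦ f₁ (M (u, s))) := by
    have : Integrable (fun q : ℝ × EuclideanSpace ℝ (Fin (p - 1)) ↦ f₁ (M q))
        (volume.prod volume) := by
      rw [← Measure.volume_eq_prod]; exact (hM.integrable_comp_emb M.measurableEmbedding).2 hf₁
    exact this.prod_right_ae
  have hs₂ : ∀ᵐ u : ℝ, Integrable (fun s ↦ f₂ (M (u, s))) := by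
    have : Integrable (fun q : ℝ × EuclideanSpace ℝ (Fin (p - 1)) ↦ f₂ (M q))
        (volume.prod volume) := by
      rw [← Measure.volume_eq_prod]; exact (hM.integrable_comp_emb M.measurableEmbedding).2 hf₂
    exact this.prod_right_ae
  rw [← integral_zero ℝ ℂ]
  apply integral_congr_ae
  filter_upwards [hae, hs₁, hs₂] with u h1 h2 h3
  have step1 : ∫ s, 𝐞 (-⟪M (u, s), r • θ⟫) • g (M (u, s)) =
      (𝐞 (-(r * u)) : ℂ) * ∫ s, g (M (u, s)) := by
    rw [← integral_const_mul]
    congr 1 with s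
    rw [hinner, Circle.smul_def, smul_eq_mul]
  have step2 : ∫ s, g (M (u, s)) = ((radon p f₁ θ e u - radon p f₂ θ e u : ℝ) : ℂ) := by
    have hrw : (fun s : EuclideanSpace ℝ (Fin (p - 1)) ↦ g (M (u, s))) =
        fun s ↦ ((f₁ (M (u, s)) - f₂ (M (u, s)) : ℝ) : ℂ) := rfl
    have key : ∫ s, ((f₁ (M (u, s)) - f₂ (M (u, s)) : ℝ) : ℂ) =
        ((∫ s, (f₁ (M (u, s)) - f₂ (M (u, s))) : ℝ) : ℂ) := integral_ofReal
    rw [hrw, key]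
    congr 1
    rw [integral_sub h2 h3]
    congr 1
    · unfold radon
      refine integral_congr_ae (Filter.Eventually.of_forall fun s ↦ ?_)
      simp only
      rw [hMapp]
    · unfold radon
      refine integral_congr_ae (Filter.Eventually.of_forall fun s ↦ ?_)
      simp only
      rw [hMapp]
  rw [step1, step2, h1, sub_self, Complex.ofReal_zero, mul_zero]


end Aux

/-- Injectivity of the Radon transform: if two integrable functions have almost everywhere
equal Radon slices in every direction, they agree almost everywhere. -/
theorem radon_injective (p : ℕ) (hp : 1 ≤ p)
    (f₁ f₂ : EuclideanSpace ℝ (Fin p) → ℝ)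
    (hf₁ : Integrable f₁) (hf₂ : Integrable f₂)
    (h : ∀ θ : EuclideanSpace ℝ (Fin p), ‖θ‖ = 1 →
      ∃ e : Fin (p - 1) → EuclideanSpace ℝ (Fin p),
        Orthonormal ℝ (Sum.elim (fun _ : Unit => θ) e) ∧
        Submodule.span ℝ (Set.range (Sum.elim (fun _ : Unit => θ) e)) = ⊤ ∧
        ∀ᵐ u : ℝ, radon p f₁ θ e u = radon p f₂ θ e u) :
    f₁ =ᵐ[volume] f₂ := by

  set g : EuclideanSpace ℝ (Fin p) → ℂ := fun x ↦ ((f₁ x - f₂ x : ℝ) : ℂ) with hgdef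
  have hg : Integrable g := (hf₁.sub hf₂).ofReal
  have hzero : ∀ ξ, 𝓕 g ξ = 0 := by
    intro ξ
    by_cases hξ : ξ = 0
    · subst hξ
      have hθ : ‖(EuclideanSpace.single (⟨0, hp⟩ : Fin p) (1 : ℝ))‖ = 1 := by
        simp
      obtain ⟨e, horth, hspan, hae⟩ := h _ hθ
      have := slice_zero p f₁ f₂ hf₁ hf₂ _ hθ e horth hspan hae 0
      rwa [zero_smul] at this
    · set θ := ‖ξ‖⁻¹ • ξ with hθdef
      have hξ' : ‖ξ‖ ≠ 0 := norm_ne_zero_iff.2 hξ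
      have hθ : ‖θ‖ = 1 := by
        rw [hθdef, norm_smul, norm_inv, norm_norm, inv_mul_cancel₀ hξ']
      obtain ⟨e, horth, hspan, hae⟩ := h θ hθ
      have := slice_zero p f₁ f₂ hf₁ hf₂ θ hθ e horth hspan hae ‖ξ‖
      rwa [hθdef, smul_inv_smul₀ hξ'] at this
  have hg0 := fourier_zero_imp_ae_zero hg hzero
  filter_upwards [hg0] with x hx
  rw [hgdef] at hx
  simp only [Complex.ofReal_eq_zero, sub_eq_zero] at hx
  exact hx
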